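/- Fix a parameter μ and an integer sequence (e_k), and define f_n(y) = χ_{M_n}(2y + μ) where χ_{M_n} is the characteristic polynomial of the n×n tridiagonal matrix with diagonal (e_0,...,e_{n-1}) and sub/super-diagonals 1 (χ_{M_0} = 1). Then for every n ≥ 0: f_n = U_n + Σ_{k=0}^{n-1} (μ - e_k)·f_k·U_{n-k-1}, where (U_n) are the Chebyshev polynomials of the second kind. -/
import Mathlib

open Polynomial Matrix

variable {R : Type*} [CommRing R]

def triT (d : ℕ → R) (n : ℕ) : Matrix (Fin n) (Fin n) R :=
  Matrix.of fun i j =>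
    if (i : ℕ) = (j : ℕ) then d i
    else if (i : ℕ) + 1 = (j : ℕ) ∨ (j : ℕ) + 1 = (i : ℕ) then -1 else 0

lemma triT_apply (d : ℕ → R) (n : ℕ) (i j : Fin n) :
    triT d n i j = if (i : ℕ) = (j : ℕ) then d i
    else if (i : ℕ) + 1 = (j : ℕ) ∨ (j : ℕ) + 1 = (i : ℕ) then -1 else 0 := rfl

lemma triT_eq_zero (d : ℕ → R) {n : ℕ} (i j : Fin n)
    (h1 : (i : ℕ) ≠ (j : ℕ)) (h2 : (i : ℕ) + 1 ≠ (j : ℕ)) (h3 : (j : ℕ) + 1 ≠ (i : ℕ)) :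
    triT d n i j = 0 := by
  rw [triT_apply, if_neg h1, if_neg (by tauto)]

lemma triT_eq_neg_one (d : ℕ → R) {n : ℕ} (i j : Fin n)
    (h : (i : ℕ) + 1 = (j : ℕ) ∨ (j : ℕ) + 1 = (i : ℕ)) :
    triT d n i j = -1 := by
  rw [triT_apply, if_neg (by omega), if_pos h]

lemma triT_eq_diag (d : ℕ → R) {n : ℕ} (i j : Fin n) (h : (i : ℕ) = (j : ℕ)) :
    triT d n i j = d i := by
  rw [triT_apply, if_pos h]

lemma triT_entry_val (d : ℕ → R) {m M : ℕ} (i j : Fin m) (i' j' : Fin M)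
    (hi : (i' : ℕ) = (i : ℕ)) (hj : (j' : ℕ) = (j : ℕ)) :
    triT d M i' j' = triT d m i j := by
  simp [triT_apply, hi, hj]

lemma succAbove_last_val {n : ℕ} (i : Fin n) :
    ((Fin.last n).succAbove i : ℕ) = (i : ℕ) := by
  simp [Fin.succAbove_last]

lemma succAbove_mid_val {n : ℕ} (j : Fin (n+1)) :
    (((Fin.last n).castSucc).succAbove j : ℕ) = if (j : ℕ) < n then (j : ℕ) else (j : ℕ) + 1 := by
  rw [Fin.succAbove]
  split_ifs with h1 h2 h2 <;> simp_all [Fin.lt_iff_val_lt_val]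

lemma triT_det_rec (d : ℕ → R) (n : ℕ) :
    (triT d (n+2)).det = d (n+1) * (triT d (n+1)).det - (triT d n).det := by
  have hB : ((triT d (n+2)).submatrix (Fin.last (n+1)).succAbove
      ((Fin.last n).castSucc).succAbove).det = -(triT d n).det := by
    rw [Matrix.det_succ_column _ (Fin.last n), Fin.sum_univ_castSucc]
    have hzero : ∀ i : Fin n,
        (triT d (n+2)).submatrix (Fin.last (n+1)).succAbove ((Fin.last n).castSucc).succAbove
          i.castSucc (Fin.last n) = 0 := by
      intro i
      rw [Matrix.submatrix_apply]
      have hi : (i : ℕ) < n := i.isLt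
      refine triT_eq_zero d _ _ ?_ ?_ ?_ <;>
        rw [succAbove_last_val, succAbove_mid_val] <;>
        simp <;> omega
    rw [Finset.sum_eq_zero (fun i _ => by rw [hzero i]; ring), zero_add]
    have hentry : (triT d (n+2)).submatrix (Fin.last (n+1)).succAbove
        ((Fin.last n).castSucc).succAbove (Fin.last n) (Fin.last n) = -1 := by
      rw [Matrix.submatrix_apply]
      refine triT_eq_neg_one d _ _ (Or.inl ?_)
      rw [succAbove_last_val, succAbove_mid_val]
      simp
    rw [hentry]
    have hsub2 : ((triT d (n+2)).submatrix (Fin.last (n+1)).succAbove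
        ((Fin.last n).castSucc).succAbove).submatrix (Fin.last n).succAbove
        (Fin.last n).succAbove = triT d n := by
      ext i j
      rw [Matrix.submatrix_submatrix, Matrix.submatrix_apply]
      refine triT_entry_val d i j _ _ ?_ ?_
      · rw [Function.comp_apply, succAbove_last_val, succAbove_last_val]
      · rw [Function.comp_apply, succAbove_mid_val, succAbove_last_val]
        rw [if_pos j.isLt]
    rw [hsub2, Fin.val_last, show n + n = 2 * n by ring, pow_mul]
    simp
  rw [Matrix.det_succ_row (triT d (n+2)) (Fin.last (n+1))]
  rw [Fin.sum_univ_castSucc, Fin.sum_univ_castSucc]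
  have hzero : ∀ i : Fin n,
      triT d (n+2) (Fin.last (n+1)) i.castSucc.castSucc = 0 := by
    intro i
    have hi : (i : ℕ) < n := i.isLt
    refine triT_eq_zero d _ _ ?_ ?_ ?_ <;> simp <;> omega
  rw [Finset.sum_eq_zero (fun i _ => by rw [hzero i]; ring), zero_add]
  have hsubA : (triT d (n+2)).submatrix (Fin.last (n+1)).succAbove (Fin.last (n+1)).succAbove
      = triT d (n+1) := by
    ext i j
    exact triT_entry_val d i j _ _ (succAbove_last_val i) (succAbove_last_val j)
  have he1 : triT d (n+2) (Fin.last (n+1)) ((Fin.last n).castSucc) = -1 :=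
    triT_eq_neg_one d _ _ (Or.inr (by simp))
  have he2 : triT d (n+2) (Fin.last (n+1)) (Fin.last (n+1)) = d (n+1) := by
    rw [triT_eq_diag d _ _ rfl]; simp
  rw [he1, he2, hB, hsubA, Fin.val_last, Fin.coe_castSucc, Fin.val_last]
  rw [show (n+1) + n = 2*n + 1 by ring, show (n+1) + (n+1) = 2*(n+1) by ring,
    pow_succ, pow_mul, pow_mul]
  simp
  ring

/-- The `n × n` tridiagonal matrix with diagonal entries `e 0, …, e (n-1)` and
sub- and super-diagonal entries equal to `1`. -/
def triM (e : ℕ → ℤ) (n : ℕ) : Matrix (Fin n) (Fin n) ℝ :=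
  Matrix.of fun i j =>
    if (i : ℕ) = (j : ℕ) then (e i : ℝ)
    else if (i : ℕ) + 1 = (j : ℕ) ∨ (j : ℕ) + 1 = (i : ℕ) then 1 else 0

lemma charmatrix_triM (e : ℕ → ℤ) (n : ℕ) :
    charmatrix (triM e n) = triT (fun k => X - C ((e k : ℝ))) n := by
  ext i j
  by_cases h : i = j
  · subst h
    rw [charmatrix_apply_eq]
    simp [triT, triM]
  · rw [charmatrix_apply_ne _ _ _ h]
    have hv : (i : ℕ) ≠ (j : ℕ) := fun hc => h (Fin.ext hc)
    by_cases hb : (i : ℕ) + 1 = (j : ℕ) ∨ (j : ℕ) + 1 = (i : ℕ)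
    · simp [triT, triM, hv, hb]
    · simp [triT, triM, hv, hb]

lemma charpoly_triM_zero (e : ℕ → ℤ) : (triM e 0).charpoly = 1 := by
  rw [Matrix.charpoly, Matrix.det_isEmpty]

lemma charpoly_triM_one (e : ℕ → ℤ) : (triM e 1).charpoly = X - C ((e 0 : ℝ)) := by
  rw [Matrix.charpoly, Matrix.det_fin_one, charmatrix_apply_eq]
  simp [triM]

lemma charpoly_triM_rec (e : ℕ → ℤ) (n : ℕ) :
    (triM e (n+2)).charpoly =
      (X - C ((e (n+1) : ℝ))) * (triM e (n+1)).charpoly - (triM e n).charpoly := by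
  rw [Matrix.charpoly, Matrix.charpoly, Matrix.charpoly,
    charmatrix_triM, charmatrix_triM, charmatrix_triM]
  exact triT_det_rec _ n

/-- Chebyshev polynomials of the second kind (over `ℝ`). -/
noncomputable def chebU : ℕ → Polynomial ℝ
  | 0 => 1
  | 1 => 2 * X
  | n + 2 => 2 * X * chebU (n + 1) - chebU n

/-- The shifted characteristic polynomial `f_n(y) = χ_{M_n}(2y + μ)`. -/
noncomputable def fShift (e : ℕ → ℤ) (μ : ℝ) (n : ℕ) : Polynomial ℝ :=
  ((triM e n).charpoly).comp (2 * X + C μ)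

lemma fShift_zero (e : ℕ → ℤ) (μ : ℝ) : fShift e μ 0 = 1 := by
  rw [fShift, charpoly_triM_zero, one_comp]

lemma fShift_one (e : ℕ → ℤ) (μ : ℝ) : fShift e μ 1 = 2 * X + C (μ - (e 0 : ℝ)) := by
  rw [fShift, charpoly_triM_one, sub_comp, X_comp, C_comp]
  rw [C_sub]
  ring

lemma fShift_rec (e : ℕ → ℤ) (μ : ℝ) (n : ℕ) :
    fShift e μ (n+2) =
      (2 * X + C (μ - (e (n+1) : ℝ))) * fShift e μ (n+1) - fShift e μ n := by
  rw [fShift, fShift, fShift, charpoly_triM_rec, sub_comp, mul_comp, sub_comp, X_comp, C_comp]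
  rw [C_sub]
  ring

lemma chebU_rec (n : ℕ) : chebU (n+2) = 2 * X * chebU (n+1) - chebU n := rfl

theorem stmt18 (e : ℕ → ℤ) (μ : ℝ) (n : ℕ) :
    fShift e μ n =
      chebU n + ∑ k ∈ Finset.range n,
        C (μ - (e k : ℝ)) * fShift e μ k * chebU (n - k - 1) := by
  suffices h : ∀ m : ℕ,
      (fShift e μ m = chebU m + ∑ k ∈ Finset.range m,
        C (μ - (e k : ℝ)) * fShift e μ k * chebU (m - k - 1)) ∧
      (fShift e μ (m+1) = chebU (m+1) + ∑ k ∈ Finset.range (m+1),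
        C (μ - (e k : ℝ)) * fShift e μ k * chebU (m + 1 - k - 1)) from (h n).1
  intro m
  induction m with
  | zero =>
    constructor
    · simp [fShift_zero, chebU]
    · rw [fShift_one, Finset.sum_range_one, fShift_zero]
      show _ = chebU 1 + _ * chebU 0
      rw [show chebU 1 = 2 * X from rfl, show chebU 0 = 1 from rfl]
      ring
  | succ m ih =>
    obtain ⟨h1, h2⟩ := ih
    refine ⟨h2, ?_⟩
    -- rewrite h2 sum index
    have h2' : fShift e μ (m+1) = chebU (m+1) + ∑ k ∈ Finset.range (m+1),
        C (μ - (e k : ℝ)) * fShift e μ k * chebU (m - k) := by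
      rw [h2]
      congr 1
      exact Finset.sum_congr rfl fun k hk => by
        have : m + 1 - k - 1 = m - k := by omega
        rw [this]
    -- key sum identity
    have hsum : ∑ k ∈ Finset.range (m+1),
          C (μ - (e k : ℝ)) * fShift e μ k * chebU (m + 1 - k) =
        2 * X * (∑ k ∈ Finset.range (m+1),
          C (μ - (e k : ℝ)) * fShift e μ k * chebU (m - k)) -
        ∑ k ∈ Finset.range m,
          C (μ - (e k : ℝ)) * fShift e μ k * chebU (m - k - 1) := by
      rw [Finset.sum_range_succ, Finset.sum_range_succ (f := fun k =>
        C (μ - (e k : ℝ)) * fShift e μ k * chebU (m - k))]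
      have hterm : ∀ k ∈ Finset.range m,
          C (μ - (e k : ℝ)) * fShift e μ k * chebU (m + 1 - k) =
          2 * X * (C (μ - (e k : ℝ)) * fShift e μ k * chebU (m - k)) -
          C (μ - (e k : ℝ)) * fShift e μ k * chebU (m - k - 1) := by
        intro k hk
        have hklt : k < m := Finset.mem_range.mp hk
        obtain ⟨t, ht⟩ : ∃ t, m - k - 1 = t := ⟨_, rfl⟩
        have e1 : m + 1 - k = t + 2 := by omega
        have e2 : m - k = t + 1 := by omega
        rw [e1, e2, show t + 1 - 1 = t from rfl, chebU_rec]
        ring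
      rw [Finset.sum_congr rfl hterm, Finset.sum_sub_distrib, mul_add, Finset.mul_sum]
      rw [show m + 1 - m = 1 from by omega, show m - m = 0 from by omega]
      rw [show chebU 1 = 2 * X from rfl, show chebU 0 = 1 from rfl]
      ring
    rw [show m + 1 + 1 = m + 2 from rfl, fShift_rec, chebU_rec]
    have hidx : ∑ k ∈ Finset.range (m+2),
        C (μ - (e k : ℝ)) * fShift e μ k * chebU (m + 2 - k - 1) =
        (∑ k ∈ Finset.range (m+1),
          C (μ - (e k : ℝ)) * fShift e μ k * chebU (m + 1 - k)) +
        C (μ - (e (m+1) : ℝ)) * fShift e μ (m+1) := by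
      rw [Finset.sum_range_succ]
      rw [show m + 2 - (m+1) - 1 = 0 from by omega, show chebU 0 = 1 from rfl]
      rw [mul_one]
      congr 1
      exact Finset.sum_congr rfl fun k hk => by
        have : m + 2 - k - 1 = m + 1 - k := by omega
        rw [this]
    rw [hidx, hsum]
    rw [h2', h1]
    ring
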